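/- Let (W,S) be a Coxeter system, X ⊆ S, and i, j distinct indices in S. For any w ∈ W, exactly one of the following holds: (1) w·W_{{i,j}}·w⁻¹ ∩ W_X is trivial; (2) w·W_{{i,j}}·w⁻¹ ⊆ W_X; or (3) w·W_{{i,j}}·w⁻¹ ∩ W_X contains exactly one nontrivial element. -/

import Mathlib

open List

namespace CoxAux

open scoped Classical

variable {B W : Type*} [Group W] {M : CoxeterMatrix B} (cs : CoxeterSystem M W)

open CoxeterSystem

local prefix:100 "s" => cs.simple
local prefix:100 "π" => cs.wordProd
local prefix:100 "ℓ" => cs.length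

/-- The basic "toss" endomorphism of `W × ℤˣ` associated to a simple reflection. -/
noncomputable def toss (i : B) : Function.End (W × ℤˣ) :=
  fun p => (s i * p.1 * s i, if p.1 = s i then -p.2 else p.2)

theorem prod_toss_apply (ω : List B) (t : W) (ε : ℤˣ) :
    (ω.map (toss cs)).prod (t, ε) =
      (π ω * t * (π ω)⁻¹, (-1 : ℤˣ) ^ ((cs.rightInvSeq ω).count t) * ε) := by
  induction ω generalizing t ε with
  | nil =>
    show (1 : Function.End (W × ℤˣ)) (t, ε) = _
    simp [Function.End.one_def, CoxeterSystem.wordProd_nil]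
  | cons i ω ih =>
    rw [List.map_cons, List.prod_cons]
    show toss cs i ((map (toss cs) ω).prod (t, ε)) = _
    rw [ih]
    show toss cs i _ = _
    rw [toss]
    have hris : cs.rightInvSeq (i :: ω) = ((π ω)⁻¹ * (s i) * (π ω)) :: cs.rightInvSeq ω := rfl
    have hcond : (π ω * t * (π ω)⁻¹ = s i) ↔ (t = (π ω)⁻¹ * (s i) * (π ω)) := by
      constructor
      · intro h; rw [← h]; group
      · intro h; rw [h]; group
    have hfst : s i * (π ω * t * (π ω)⁻¹) * s i = π (i :: ω) * t * (π (i :: ω))⁻¹ := by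
      rw [cs.wordProd_cons, mul_inv_rev, cs.inv_simple]; group
    by_cases h : t = (π ω)⁻¹ * (s i) * (π ω)
    · rw [if_pos (hcond.mpr h)]
      refine Prod.ext hfst ?_
      show -((-1 : ℤˣ) ^ ((cs.rightInvSeq ω).count t) * ε) = _
      rw [hris, List.count_cons]
      simp only [h.symm, if_pos rfl, beq_self_eq_true, if_true, pow_succ]
      rw [mul_neg_one, neg_mul]
    · rw [if_neg (fun hc => h (hcond.mp hc))]
      refine Prod.ext hfst ?_
      show (-1 : ℤˣ) ^ ((cs.rightInvSeq ω).count t) * ε = _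
      rw [hris, List.count_cons]
      have : ¬((π ω)⁻¹ * (s i) * (π ω) == t) := by
        simp only [beq_iff_eq]; exact fun hc => h hc.symm
      simp [this]


theorem drop_alternatingWord (i j : B) (n k : ℕ) :
    (alternatingWord i j n).drop k = alternatingWord i j (n - k) := by
  induction n generalizing k with
  | zero => simp [alternatingWord]
  | succ n ih =>
    cases k with
    | zero => simp
    | succ k =>
      rw [alternatingWord_succ' i j n, List.drop_succ_cons, ih k]
      congr 1
      omega

theorem getD_ris_alternatingWord (i j : B) {n l : ℕ} (hl : l < n) :
    (cs.rightInvSeq (alternatingWord i j n)).getD l 1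
      = (π (alternatingWord i j (n - l - 1)))⁻¹ * π (alternatingWord i j (n - l)) := by
  have hlen : (alternatingWord i j n).length = n := length_alternatingWord i j n
  rw [cs.getD_rightInvSeq]
  rw [drop_alternatingWord]
  have hget : (alternatingWord i j n)[l]? = some ((alternatingWord i j n)[l]) := by
    rw [List.getElem?_eq_getElem (by omega)]
  rw [hget]
  simp only [Option.map_some, Option.getD_some]
  have h2 : π (alternatingWord i j (n - l))
      = s ((alternatingWord i j n)[l]) * π (alternatingWord i j (n - l - 1)) := by
    rw [← drop_alternatingWord i j n l, List.drop_eq_getElem_cons (by omega), cs.wordProd_cons,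
      drop_alternatingWord, Nat.sub_sub]
  rw [h2]
  have h3 : n - (l + 1) = n - l - 1 := by omega
  rw [h3]
  group

theorem g_eq (i j : B) (k : ℕ) :
    (π (alternatingWord i j k))⁻¹ * π (alternatingWord i j (k + 1))
      = s j * (s i * s j) ^ k := by
  have key : ∀ c : ℕ, ((s i * s j) ^ c)⁻¹ * s j = s j * (s i * s j) ^ c := by
    intro c
    induction c with
    | zero => simp
    | succ c ih =>
      have hinv : (s i * s j)⁻¹ * s j = s j * (s i * s j) := by
        rw [mul_inv_rev, cs.inv_simple, cs.inv_simple, mul_assoc]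
      rw [pow_succ, mul_inv_rev, mul_assoc, ih, ← mul_assoc, hinv, mul_assoc, ← pow_succ', ← pow_succ]
  rcases Nat.even_or_odd k with ⟨c, hc⟩ | ⟨c, hc⟩
  · have h1 : π (alternatingWord i j k) = (s i * s j) ^ c := by
      rw [cs.prod_alternatingWord_eq_mul_pow, if_pos ⟨c, hc⟩, (by omega : k / 2 = c), one_mul]
    have h2 : π (alternatingWord i j (k + 1)) = s j * (s i * s j) ^ c := by
      rw [cs.prod_alternatingWord_eq_mul_pow, if_neg (by rw [Nat.even_add_one]; exact fun h => h ⟨c, hc⟩),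
        (by omega : (k + 1) / 2 = c)]
    rw [h1, h2, ← mul_assoc, key c, mul_assoc, ← pow_add, (by omega : c + c = k)]
  · have h1 : π (alternatingWord i j k) = s j * (s i * s j) ^ c := by
      rw [cs.prod_alternatingWord_eq_mul_pow, if_neg (by simp [hc, parity_simps]),
        (by omega : k / 2 = c)]
    have h2 : π (alternatingWord i j (k + 1)) = (s i * s j) ^ (c + 1) := by
      rw [cs.prod_alternatingWord_eq_mul_pow, if_pos (by simp [hc, parity_simps]),
        (by omega : (k + 1) / 2 = c + 1), one_mul]
    rw [h1, h2, mul_inv_rev, cs.inv_simple, mul_assoc, ← mul_assoc _ (s j) _, key c,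
      mul_assoc, ← pow_add, (by omega : c + (c + 1) = k)]


theorem count_ris_even (i j : B) (t : W) :
    Even ((cs.rightInvSeq (alternatingWord i j (2 * M i j))).count t) := by
  set m := M i j with hm
  set L := cs.rightInvSeq (alternatingWord i j (2 * m)) with hL
  have hlen : L.length = 2 * m := by
    rw [hL, cs.length_rightInvSeq, length_alternatingWord]
  have hgetD : ∀ l : ℕ, l < 2 * m →
      L.getD l 1 = s j * (s i * s j) ^ (2 * m - l - 1) := by
    intro l hl
    rw [hL, getD_ris_alternatingWord cs i j hl,
      (by omega : 2 * m - l = (2 * m - l - 1) + 1), Nat.add_sub_cancel, g_eq]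
  have hkey : ∀ l : ℕ, l < m → L.getD (l + m) 1 = L.getD l 1 := by
    intro l hl
    rw [hgetD (l + m) (by omega), hgetD l (by omega),
      (by omega : 2 * m - l - 1 = (2 * m - (l + m) - 1) + m), pow_add,
      cs.simple_mul_simple_pow, mul_one]
  have hdt : L.drop m = L.take m := by
    apply List.ext_getElem
    · simp [hlen]; omega
    · intro l h1 h2
      rw [List.getElem_drop, List.getElem_take]
      rw [← List.getD_eq_getElem L 1 (by simp [hlen] at h1 ⊢; omega),
        ← List.getD_eq_getElem L 1 (by simp [hlen] at h1 ⊢; omega)]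
      have := hkey l (by simp [hlen] at h1; omega)
      rw [(by omega : m + l = l + m), this]
  have hsplit : L = L.take m ++ L.take m := by
    conv_lhs => rw [← List.take_append_drop m L]
    rw [hdt]
  rw [hsplit, List.count_append]
  exact ⟨(L.take m).count t, rfl⟩


theorem aw_two_succ (i j : B) (m : ℕ) :
    alternatingWord i j (2 * (m + 1)) = i :: j :: alternatingWord i j (2 * m) := by
  rw [(by omega : 2 * (m + 1) = (2 * m + 1) + 1), alternatingWord_succ',
    alternatingWord_succ']
  rw [if_neg (by simp [parity_simps]), if_pos (by simp [parity_simps])]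

theorem prod_toss_pow (i j : B) (m : ℕ) :
    (toss cs i * toss cs j) ^ m = ((alternatingWord i j (2 * m)).map (toss cs)).prod := by
  induction m with
  | zero => rfl
  | succ m ih =>
    rw [aw_two_succ, List.map_cons, List.map_cons, List.prod_cons, List.prod_cons, ← ih,
      pow_succ', ← mul_assoc]

theorem toss_liftable : M.IsLiftable (toss cs) := by
  intro i j
  rw [prod_toss_pow]
  funext p
  obtain ⟨t, ε⟩ := p
  show _ = (1 : Function.End (W × ℤˣ)) (t, ε)
  rw [prod_toss_apply, Function.End.one_def, id_eq]
  have h1 : π (alternatingWord i j (2 * M i j)) = 1 := by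
    rw [cs.prod_alternatingWord_eq_mul_pow, if_pos (by simp [parity_simps]),
      (by omega : 2 * M i j / 2 = M i j), one_mul, cs.simple_mul_simple_pow]
  rw [h1, (count_ris_even cs i j t).neg_one_pow]
  simp

noncomputable def eta : W →* Function.End (W × ℤˣ) :=
  cs.lift ⟨toss cs, toss_liftable cs⟩

theorem eta_simple (i : B) : eta cs (s i) = toss cs i :=
  cs.lift_apply_simple (toss_liftable cs) i

theorem eta_wordProd (ω : List B) : eta cs (π ω) = (ω.map (toss cs)).prod := by
  rw [wordProd, map_list_prod, List.map_map]
  congr 1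
  apply List.map_congr_left
  intro b _
  exact eta_simple cs b

noncomputable def mu (w t : W) : ℤˣ := ((eta cs w) (t, 1)).2

theorem mu_wordProd (ω : List B) (t : W) :
    mu cs (π ω) t = (-1 : ℤˣ) ^ ((cs.rightInvSeq ω).count t) := by
  rw [mu, eta_wordProd, prod_toss_apply, mul_one]

theorem eta_apply (w t : W) (ε : ℤˣ) :
    eta cs w (t, ε) = (w * t * w⁻¹, mu cs w t * ε) := by
  obtain ⟨ω, rfl⟩ := cs.wordProd_surjective w
  rw [eta_wordProd, prod_toss_apply, mu_wordProd]

theorem mu_mul (x y t : W) : mu cs (x * y) t = mu cs x (y * t * y⁻¹) * mu cs y t := by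
  have h : eta cs (x * y) (t, 1) = eta cs x (eta cs y (t, 1)) := by
    rw [map_mul]; rfl
  rw [mu, h, eta_apply cs y t 1, mul_one, eta_apply]

theorem mu_simple (i : B) (t : W) : mu cs (s i) t = if t = s i then -1 else 1 := by
  rw [mu, eta_simple]
  show (if t = s i then -(1 : ℤˣ) else 1) = _
  rfl

theorem mu_one (t : W) : mu cs 1 t = 1 := by
  rw [mu, map_one]
  rfl

theorem mu_refl_self {t : W} (ht : cs.IsReflection t) : mu cs t t = -1 := by
  obtain ⟨u, i, rfl⟩ := ht
  set t := u * s i * u⁻¹ with hdef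
  have e1 : u⁻¹ * t * u⁻¹⁻¹ = s i := by rw [hdef]; group
  have e2 : (s i * u⁻¹) * t * (s i * u⁻¹)⁻¹ = s i := by rw [hdef]; group
  have h1 : mu cs u (s i) * mu cs u⁻¹ t = 1 := by
    rw [← e1, ← mu_mul, mul_inv_cancel, mu_one]
  have h2 : mu cs (s i * u⁻¹) t = - mu cs u⁻¹ t := by
    rw [(by group : s i * u⁻¹ = (s i) * u⁻¹), mu_mul, e1, mu_simple, if_pos rfl, neg_one_mul]
  have h3 : mu cs (u * (s i * u⁻¹)) t
      = mu cs u ((s i * u⁻¹) * t * (s i * u⁻¹)⁻¹) * mu cs (s i * u⁻¹) t := mu_mul cs _ _ _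
  rw [e2] at h3
  have h4 : u * (s i * u⁻¹) = t := by rw [hdef]; group
  rw [h4] at h3
  rw [h3, h2, mul_neg, h1]

theorem mu_mul_refl (w : W) {t : W} (ht : cs.IsReflection t) :
    mu cs (w * t) t = - mu cs w t := by
  rw [mu_mul, (by group : t * t * t⁻¹ = t), mu_refl_self cs ht, mul_neg_one]

theorem mem_ris_of_isRightInversion {ω : List B} (hω : cs.IsReduced ω) {t : W}
    (ht : cs.IsReflection t) (hlt : ℓ (π ω * t) < ℓ (π ω)) : t ∈ cs.rightInvSeq ω := by
  by_contra hmem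
  have h0 : mu cs (π ω) t = 1 := by
    rw [mu_wordProd, List.count_eq_zero.mpr hmem, pow_zero]
  have h1 : mu cs (π ω * t) t = -1 := by rw [mu_mul_refl cs _ ht, h0]
  obtain ⟨ω', hω', heq⟩ := cs.exists_reduced_word' (π ω * t)
  rw [heq, mu_wordProd] at h1
  have hc : (cs.rightInvSeq ω').count t ≠ 0 := by
    intro h
    rw [h, pow_zero] at h1
    exact absurd h1 (by decide)
  have hmem' : t ∈ cs.rightInvSeq ω' := List.count_pos_iff.mp (Nat.pos_of_ne_zero hc)
  obtain ⟨k, hk, hgetD⟩ := List.mem_iff_getElem.mp hmem'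
  have hk' : k < ω'.length := by rwa [cs.length_rightInvSeq] at hk
  have h2 : π ω' * (cs.rightInvSeq ω').getD k 1 = π (ω'.eraseIdx k) :=
    cs.wordProd_mul_getD_rightInvSeq ω' k
  rw [List.getD_eq_getElem _ 1 hk, hgetD, ← heq] at h2
  have h3 : π ω * t * t = π ω := by
    rw [mul_assoc, ht.mul_self, mul_one]
  rw [h3] at h2
  have h4 : ℓ (π ω) ≤ (ω'.eraseIdx k).length := h2 ▸ cs.length_wordProd_le _
  have h5 : (ω'.eraseIdx k).length = ω'.length - 1 := by
    rw [List.length_eraseIdx]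
    simp [hk']
  have h6 : ℓ (π ω * t) = ω'.length := by rw [heq]; exact hω'
  omega

theorem mem_lis_of_isLeftInversion {ω : List B} (hω : cs.IsReduced ω) {t : W}
    (ht : cs.IsReflection t) (hlt : ℓ (t * π ω) < ℓ (π ω)) : t ∈ cs.leftInvSeq ω := by
  have h1 : t ∈ cs.rightInvSeq ω.reverse := by
    apply mem_ris_of_isRightInversion cs ((cs.isReduced_reverse_iff ω).mpr hω) ht
    rw [cs.wordProd_reverse]
    have e1 : ℓ ((π ω)⁻¹ * t) = ℓ (t * π ω) := by
      rw [← cs.length_inv, mul_inv_rev, inv_inv, ht.inv]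
    rw [e1, cs.length_inv]
    exact hlt
  rw [cs.rightInvSeq_reverse, List.mem_reverse] at h1
  exact h1

theorem exchange_left {ω : List B} (hω : cs.IsReduced ω) {t : W}
    (ht : cs.IsReflection t) (hlt : ℓ (t * π ω) < ℓ (π ω)) :
    ∃ k, k < ω.length ∧ t * π ω = π (ω.eraseIdx k) := by
  obtain ⟨k, hk, hgetD⟩ := List.mem_iff_getElem.mp (mem_lis_of_isLeftInversion cs hω ht hlt)
  have hk' : k < ω.length := by rwa [cs.length_leftInvSeq] at hk
  refine ⟨k, hk', ?_⟩
  rw [← cs.getD_leftInvSeq_mul_wordProd ω k, List.getD_eq_getElem _ 1 hk, hgetD]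

theorem exchange_right {ω : List B} (hω : cs.IsReduced ω) {t : W}
    (ht : cs.IsReflection t) (hlt : ℓ (π ω * t) < ℓ (π ω)) :
    ∃ k, k < ω.length ∧ π ω * t = π (ω.eraseIdx k) := by
  obtain ⟨k, hk, hgetD⟩ := List.mem_iff_getElem.mp (mem_ris_of_isRightInversion cs hω ht hlt)
  have hk' : k < ω.length := by rwa [cs.length_rightInvSeq] at hk
  refine ⟨k, hk', ?_⟩
  rw [← cs.wordProd_mul_getD_rightInvSeq ω k, List.getD_eq_getElem _ 1 hk, hgetD]


def SP (X : Set B) : Subgroup W := Subgroup.closure (cs.simple '' X)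


theorem wordProd_mem_SP {X : Set B} {ω : List B} (h : ∀ b ∈ ω, b ∈ X) :
    π ω ∈ SP cs X := by
  induction ω with
  | nil => rw [cs.wordProd_nil]; exact one_mem _
  | cons b ω ih =>
    rw [cs.wordProd_cons]
    exact mul_mem (Subgroup.subset_closure ⟨b, h b mem_cons_self, rfl⟩)
      (ih fun c hc => h c (mem_cons_of_mem b hc))

theorem mem_SP_iff {X : Set B} {w : W} :
    w ∈ SP cs X ↔ ∃ ω : List B, (∀ b ∈ ω, b ∈ X) ∧ w = π ω := by
  constructor
  · intro hw
    induction hw using Subgroup.closure_induction with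
    | mem x hx =>
      obtain ⟨b, hb, rfl⟩ := hx
      exact ⟨[b], by simpa using hb, (cs.wordProd_singleton b).symm⟩
    | one => exact ⟨[], by simp, by rw [cs.wordProd_nil]⟩
    | mul x y hx hy ihx ihy =>
      obtain ⟨ω₁, h₁, rfl⟩ := ihx
      obtain ⟨ω₂, h₂, rfl⟩ := ihy
      refine ⟨ω₁ ++ ω₂, ?_, (cs.wordProd_append ω₁ ω₂).symm⟩
      intro b hb
      rcases List.mem_append.mp hb with h | h
      exacts [h₁ b h, h₂ b h]
    | inv x hx ihx =>
      obtain ⟨ω₁, h₁, rfl⟩ := ihx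
      exact ⟨ω₁.reverse, fun b hb => h₁ b (List.mem_reverse.mp hb),
        (cs.wordProd_reverse ω₁).symm⟩
  · rintro ⟨ω, h, rfl⟩
    exact wordProd_mem_SP cs h

theorem exists_reduced_word_subset :
    ∀ n (ω : List B), ω.length = n →
      ∃ ω' : List B, (∀ b ∈ ω', b ∈ ω) ∧ cs.IsReduced ω' ∧ π ω' = π ω := by
  intro n
  induction n using Nat.strong_induction_on with
  | _ n IH =>
  intro ω hlen
  by_cases hred : cs.IsReduced ω
  · exact ⟨ω, fun b hb => hb, hred, rfl⟩
  · have hlenpos : 0 < ω.length := by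
      rcases Nat.eq_zero_or_pos ω.length with h | h
      · exfalso; apply hred
        rw [List.length_eq_zero_iff] at h
        subst h
        show ℓ (π []) = _
        simp [cs.wordProd_nil]
      · exact h
    have hQ : ∃ k, ¬ cs.IsReduced (ω.take (k + 1)) := by
      refine ⟨ω.length - 1, ?_⟩
      rw [(by omega : ω.length - 1 + 1 = ω.length), List.take_length]
      exact hred
    set k₀ := Nat.find hQ with hk₀
    have hk₀spec : ¬ cs.IsReduced (ω.take (k₀ + 1)) := Nat.find_spec hQ
    have hk₀lt : k₀ < ω.length := by
      have h1 : ¬ cs.IsReduced (ω.take ((ω.length - 1) + 1)) := by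
        rw [(by omega : ω.length - 1 + 1 = ω.length), List.take_length]
        exact hred
      have := Nat.find_min' hQ h1
      omega
    have hprev : cs.IsReduced (ω.take k₀) := by
      rcases Nat.eq_zero_or_pos k₀ with h | h
      · rw [h, List.take_zero]
        show ℓ (π []) = _
        simp [cs.wordProd_nil]
      · have := Nat.find_min hQ (show k₀ - 1 < Nat.find hQ by omega)
        rw [not_not, (by omega : k₀ - 1 + 1 = k₀)] at this
        exact this
    have htake : ω.take (k₀ + 1) = ω.take k₀ ++ [ω[k₀]] := by
      rw [List.take_succ, List.getElem?_eq_getElem hk₀lt]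
      rfl
    have hprod : π (ω.take (k₀ + 1)) = π (ω.take k₀) * s (ω[k₀]) := by
      rw [htake, cs.wordProd_append, cs.wordProd_singleton]
    have hlt : ℓ (π (ω.take k₀) * s (ω[k₀])) < ℓ (π (ω.take k₀)) := by
      have hlen₀ : (ω.take k₀).length = k₀ := by simp [hk₀lt.le]
      have hlen₁ : (ω.take (k₀ + 1)).length = k₀ + 1 := by simp; omega
      have h1 : ℓ (π (ω.take (k₀ + 1))) ≠ k₀ + 1 := fun hc => hk₀spec
        (show ℓ (π (ω.take (k₀ + 1))) = (ω.take (k₀ + 1)).length by rw [hc, hlen₁])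
      have h2 : ℓ (π (ω.take k₀)) = k₀ := hprev.trans hlen₀
      rcases cs.length_mul_simple (π (ω.take k₀)) (ω[k₀]) with h | h
      · exfalso; rw [← hprod] at h; rw [h, h2] at h1; exact h1 rfl
      · rw [h2]; omega
    obtain ⟨j, hj, hex⟩ := exchange_right cs hprev (cs.isReflection_simple _) hlt
    set ω'' := (ω.take k₀).eraseIdx j ++ ω.drop (k₀ + 1) with hω''
    have hprodeq : π ω'' = π ω := by
      rw [hω'', cs.wordProd_append, ← hex, ← hprod]
      rw [← cs.wordProd_append, List.take_append_drop]
    have hlen'' : ω''.length < n := by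
      rw [hω'']
      rw [List.length_append, List.length_eraseIdx]
      have h1 : (ω.take k₀).length = k₀ := by simp [hk₀lt.le]
      have h2 : (ω.drop (k₀ + 1)).length = ω.length - (k₀ + 1) := by simp
      rw [h1, h2, if_pos (h1 ▸ hj)]
      omega
    obtain ⟨ω', hsub, hred', heq'⟩ := IH ω''.length hlen'' ω'' rfl
    refine ⟨ω', ?_, hred', by rw [heq', hprodeq]⟩
    intro b hb
    have hb'' : b ∈ ω'' := hsub b hb
    rw [hω''] at hb''
    rcases List.mem_append.mp hb'' with h | h
    · exact (List.take_sublist k₀ ω).subset ((List.eraseIdx_sublist _ j).subset h)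
    · exact (List.drop_sublist (k₀ + 1) ω).subset h

theorem exists_reduced_word_in {X : Set B} {w : W} (hw : w ∈ SP cs X) :
    ∃ ω : List B, (∀ b ∈ ω, b ∈ X) ∧ cs.IsReduced ω ∧ w = π ω := by
  obtain ⟨ω, hsub, rfl⟩ := (mem_SP_iff cs).mp hw
  obtain ⟨ω', hsub', hred', heq'⟩ := exists_reduced_word_subset cs ω.length ω rfl
  exact ⟨ω', fun b hb => hsub b (hsub' b hb), hred', heq'.symm⟩

theorem exists_leftDescent_in {X : Set B} {w : W} (hw : w ∈ SP cs X) (hne : w ≠ 1) :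
    ∃ x ∈ X, ℓ (s x * w) < ℓ w ∧ s x * w ∈ SP cs X := by
  obtain ⟨ω, hsub, hred, rfl⟩ := exists_reduced_word_in cs hw
  have hlenpos : 0 < ω.length := by
    rcases Nat.eq_zero_or_pos ω.length with h | h
    · exfalso; apply hne; rw [List.length_eq_zero_iff] at h; subst h; exact cs.wordProd_nil
    · exact h
  obtain ⟨x, ω', rfl⟩ : ∃ x ω', ω = x :: ω' := by
    cases ω with
    | nil => simp at hlenpos
    | cons x ω' => exact ⟨x, ω', rfl⟩
  refine ⟨x, hsub x mem_cons_self, ?_, ?_⟩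
  · rw [cs.wordProd_cons, ← mul_assoc, cs.simple_mul_simple_self, one_mul]
    have h1 : ℓ (π (x :: ω')) = ω'.length + 1 := by
      rw [show ℓ (π (x :: ω')) = (x :: ω').length from hred, List.length_cons]
    rw [cs.wordProd_cons] at h1
    have h2 : ℓ (π ω') ≤ ω'.length := cs.length_wordProd_le ω'
    omega
  · rw [cs.wordProd_cons, ← mul_assoc, cs.simple_mul_simple_self, one_mul]
    exact wordProd_mem_SP cs fun b hb => hsub b (mem_cons_of_mem x hb)

theorem exists_rightDescent_in {X : Set B} {w : W} (hw : w ∈ SP cs X) (hne : w ≠ 1) :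
    ∃ x ∈ X, ℓ (w * s x) < ℓ w ∧ w * s x ∈ SP cs X := by
  obtain ⟨x, hx, h1, h2⟩ := exists_leftDescent_in cs (inv_mem hw) (by simpa using hne)
  refine ⟨x, hx, ?_, ?_⟩
  · have e : w * s x = (s x * w⁻¹)⁻¹ := by rw [mul_inv_rev, inv_inv, cs.inv_simple]
    rw [e, cs.length_inv, ← cs.length_inv w]
    exact h1
  · have e : w * s x = (s x * w⁻¹)⁻¹ := by rw [mul_inv_rev, inv_inv, cs.inv_simple]
    rw [e]
    exact inv_mem h2


/-- If `d` has minimal length in the coset `d • SP Y`, lengths add. -/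
theorem length_add_of_min_right {Y : Set B} {d : W}
    (hd : ∀ u ∈ SP cs Y, ℓ d ≤ ℓ (d * u)) :
    ∀ v ∈ SP cs Y, ℓ (d * v) = ℓ d + ℓ v := by
  have H : ∀ n : ℕ, ∀ v ∈ SP cs Y, ℓ v = n → ℓ (d * v) = ℓ d + ℓ v := by
    intro n
    induction n using Nat.strong_induction_on with
    | _ n IH =>
    intro v hv hn
    by_cases hv1 : v = 1
    · subst hv1; simp
    obtain ⟨y, hyY, hlt, hv'mem⟩ := exists_rightDescent_in cs hv hv1
    set v' := v * s y with hv'def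
    have hyP : s y ∈ SP cs Y := Subgroup.subset_closure ⟨y, hyY, rfl⟩
    have hvv' : v = v' * s y := by
      rw [hv'def, mul_assoc, cs.simple_mul_simple_self, mul_one]
    have hlen' : ℓ v' + 1 = ℓ v := by
      rcases cs.length_mul_simple v y with h | h <;> rw [← hv'def] at h
      · omega
      · exact h
    have hIH : ℓ (d * v') = ℓ d + ℓ v' := IH (ℓ v') (by omega) v' hv'mem rfl
    rcases cs.length_mul_simple (d * v') y with h | h
    · rw [hvv', ← mul_assoc, h, hIH, ← hvv']; omega
    · exfalso
      -- h : ℓ (d * v' * s y) + 1 = ℓ (d * v')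
      obtain ⟨ωd, hωd, hdeq⟩ := cs.exists_reduced_word' d
      obtain ⟨ωv, hωvY, hωv, hveq⟩ := exists_reduced_word_in cs hv'mem
      have happ : π (ωd ++ ωv) = d * v' := by
        rw [cs.wordProd_append, ← hdeq, ← hveq]
      have hredapp : cs.IsReduced (ωd ++ ωv) := by
        show ℓ (π (ωd ++ ωv)) = _
        rw [happ, List.length_append, hIH, ← hωd, ← hωv, hdeq, hveq]
      have hlt2 : ℓ (π (ωd ++ ωv) * s y) < ℓ (π (ωd ++ ωv)) := by
        rw [happ]; omega
      obtain ⟨k, hk, hex⟩ := exchange_right cs hredapp (cs.isReflection_simple y) hlt2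
      rw [happ] at hex
      by_cases hkd : k < ωd.length
      · rw [List.eraseIdx_append_of_lt_length hkd] at hex
        have hex2 : d * v' * s y = π (ωd.eraseIdx k) * v' := by
          rw [hex, cs.wordProd_append, ← hveq]
        have hstep : d * (v' * s y * v'⁻¹) = π (ωd.eraseIdx k) := by
          rw [show d * (v' * s y * v'⁻¹) = d * v' * s y * v'⁻¹ by group, hex2]
          group
        have hmem : v' * s y * v'⁻¹ ∈ SP cs Y := mul_mem (mul_mem hv'mem hyP) (inv_mem hv'mem)
        have h1 := hd _ hmem
        rw [hstep] at h1
        have h2 : ℓ (π (ωd.eraseIdx k)) ≤ (ωd.eraseIdx k).length := cs.length_wordProd_le _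
        have h3 : (ωd.eraseIdx k).length = ωd.length - 1 := by
          rw [List.length_eraseIdx, if_pos hkd]
        have h4 : ωd.length = ℓ d := by rw [hdeq]; exact hωd.symm
        omega
      · rw [List.eraseIdx_append_of_length_le (by omega)] at hex
        have hstep : v = π (ωv.eraseIdx (k - ωd.length)) := by
          have := hex
          rw [cs.wordProd_append, ← hdeq, mul_assoc] at this
          rw [hvv']
          exact mul_left_cancel this
        have h2 : ℓ v ≤ (ωv.eraseIdx (k - ωd.length)).length := by
          rw [hstep]; exact cs.length_wordProd_le _
        have h3 : (ωv.eraseIdx (k - ωd.length)).length ≤ ωv.length := by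
          rw [List.length_eraseIdx]
          split <;> omega
        have h4 : ωv.length = ℓ v' := by rw [hveq]; exact hωv.symm
        omega
  intro v hv
  exact H (ℓ v) v hv rfl

theorem length_add_of_min_left {X : Set B} {d : W}
    (hd : ∀ u ∈ SP cs X, ℓ d ≤ ℓ (u * d)) :
    ∀ u ∈ SP cs X, ℓ (u * d) = ℓ u + ℓ d := by
  have hd' : ∀ u ∈ SP cs X, ℓ d⁻¹ ≤ ℓ (d⁻¹ * u) := by
    intro u hu
    rw [cs.length_inv, ← cs.length_inv (d⁻¹ * u), mul_inv_rev, inv_inv]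
    exact hd u⁻¹ (inv_mem hu)
  intro u hu
  have := length_add_of_min_right cs hd' u⁻¹ (inv_mem hu)
  rw [← cs.length_inv (u * d), mul_inv_rev, this, cs.length_inv, cs.length_inv]
  omega


theorem kilmoyer {X Y : Set B} {d : W}
    (hmin : ∀ a ∈ SP cs X, ∀ b ∈ SP cs Y, ℓ d ≤ ℓ (a * d * b)) :
    ∀ u ∈ SP cs X, d⁻¹ * u * d ∈ SP cs Y →
      u ∈ SP cs {x ∈ X | ∃ y ∈ Y, s x = d * s y * d⁻¹} := by
  have hminL : ∀ a ∈ SP cs X, ℓ d ≤ ℓ (a * d) := by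
    intro a ha
    have := hmin a ha 1 (one_mem _)
    rwa [mul_one] at this
  have hminR : ∀ b ∈ SP cs Y, ℓ d ≤ ℓ (d * b) := by
    intro b hb
    simpa using hmin 1 (one_mem _) b hb
  have haddR := length_add_of_min_right cs hminR
  have haddL := length_add_of_min_left cs hminL
  have H : ∀ n : ℕ, ∀ u ∈ SP cs X, d⁻¹ * u * d ∈ SP cs Y → ℓ u = n →
      u ∈ SP cs {x ∈ X | ∃ y ∈ Y, s x = d * s y * d⁻¹} := by
    intro n
    induction n using Nat.strong_induction_on with
    | _ n IH =>
    intro u hu hv hn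
    by_cases hu1 : u = 1
    · subst hu1; exact one_mem _
    obtain ⟨x, hxX, hlt, hxu⟩ := exists_leftDescent_in cs hu hu1
    set v := d⁻¹ * u * d with hvdef
    have hud : u * d = d * v := by rw [hvdef]; group
    have hlv : ℓ u = ℓ v := by
      have h1 : ℓ (u * d) = ℓ u + ℓ d := haddL u hu
      have h2 : ℓ (d * v) = ℓ d + ℓ v := haddR v hv
      rw [hud, h2] at h1
      omega
    obtain ⟨ωd, hωd, hdeq⟩ := cs.exists_reduced_word' d
    obtain ⟨ωv, hωvY, hωv, hveq⟩ := exists_reduced_word_in cs hv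
    have happ : π (ωd ++ ωv) = d * v := by
      rw [cs.wordProd_append, ← hdeq, ← hveq]
    have hredapp : cs.IsReduced (ωd ++ ωv) := by
      show ℓ (π (ωd ++ ωv)) = _
      rw [happ, List.length_append, haddR v hv, ← hωd, ← hωv, hdeq, hveq]
    have hlt2 : ℓ (s x * π (ωd ++ ωv)) < ℓ (π (ωd ++ ωv)) := by
      rw [happ, ← hud, ← mul_assoc]
      rw [haddL u hu, haddL (s x * u) hxu]
      omega
    obtain ⟨k, hk, hex⟩ := exchange_left cs hredapp (cs.isReflection_simple x) hlt2
    rw [happ] at hex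
    by_cases hkd : k < ωd.length
    · exfalso
      rw [List.eraseIdx_append_of_lt_length hkd, cs.wordProd_append, ← hveq] at hex
      have hex2 : s x * d = π (ωd.eraseIdx k) := by
        have h' : (s x * d) * v = π (ωd.eraseIdx k) * v := by
          rw [mul_assoc]; exact hex
        exact mul_right_cancel h'
      have h1 : ℓ d ≤ ℓ (s x * d) := by
        have := hmin (s x) (Subgroup.subset_closure ⟨x, hxX, rfl⟩) 1 (one_mem _)
        rwa [mul_one] at this
      have h2 : ℓ (s x * d) ≤ (ωd.eraseIdx k).length := by
        rw [hex2]; exact cs.length_wordProd_le _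
      have h3 : (ωd.eraseIdx k).length = ωd.length - 1 := by
        rw [List.length_eraseIdx, if_pos hkd]
      have h4 : ωd.length = ℓ d := by rw [hdeq]; exact hωd.symm
      omega
    · rw [List.eraseIdx_append_of_length_le (by omega), cs.wordProd_append, ← hdeq] at hex
      set t := d⁻¹ * s x * d with htdef
      have htP : t ∈ SP cs Y := by
        have h' : t = π (ωv.eraseIdx (k - ωd.length)) * v⁻¹ := by
          rw [htdef]
          have : d⁻¹ * (s x * (d * v)) * v⁻¹ = d⁻¹ * s x * d := by group
          rw [← this, hex]
          group
        rw [h']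
        refine mul_mem (wordProd_mem_SP cs ?_) (inv_mem hv)
        intro b hb
        exact hωvY b ((List.eraseIdx_sublist ωv (k - ωd.length)).subset hb)
      have hsd : ℓ (s x * d) = ℓ d + 1 := by
        have h1 : ℓ d ≤ ℓ (s x * d) := by
          have := hmin (s x) (Subgroup.subset_closure ⟨x, hxX, rfl⟩) 1 (one_mem _)
          rwa [mul_one] at this
        have h2 := cs.length_simple_mul d x
        have h3 := cs.length_simple_mul_ne d x
        omega
      have hdt : d * t = s x * d := by rw [htdef]; group
      have hlt1 : ℓ t = 1 := by
        have := haddR t htP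
        rw [hdt, hsd] at this
        omega
      obtain ⟨y, hyY, hty⟩ : ∃ y ∈ Y, t = s y := by
        obtain ⟨ω, hωY, hωred, hteq⟩ := exists_reduced_word_in cs htP
        have hlen1 : ω.length = 1 := by
          rw [← hωred, ← hteq, hlt1]
        obtain ⟨y, rfl⟩ : ∃ y, ω = [y] := by
          cases ω with
          | nil => simp at hlen1
          | cons y ω' =>
            cases ω' with
            | nil => exact ⟨y, rfl⟩
            | cons z ω'' => simp at hlen1
        exact ⟨y, hωY y mem_cons_self, by rw [hteq, cs.wordProd_singleton]⟩
      have hsx : s x = d * s y * d⁻¹ := by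
        rw [← hty, htdef]
        group
      have hu'mem : d⁻¹ * (s x * u) * d ∈ SP cs Y := by
        have heq2 : d⁻¹ * (s x * u) * d = t * v := by rw [htdef, hvdef]; group
        rw [heq2]
        exact mul_mem htP hv
      have hu'len : ℓ (s x * u) < n := by omega
      have hres := IH (ℓ (s x * u)) hu'len (s x * u) hxu hu'mem rfl
      have : u = s x * (s x * u) := by
        rw [← mul_assoc, cs.simple_mul_simple_self, one_mul]
      rw [this]
      exact mul_mem (Subgroup.subset_closure ⟨x, ⟨hxX, y, hyY, hsx⟩, rfl⟩) hres
  intro u hu hv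
  exact H (ℓ u) u hu hv rfl

theorem exists_min_double_coset (X Y : Set B) (w : W) :
    ∃ d a b : W, a ∈ SP cs X ∧ b ∈ SP cs Y ∧ w = a * d * b ∧
      ∀ a' ∈ SP cs X, ∀ b' ∈ SP cs Y, ℓ d ≤ ℓ (a' * d * b') := by
  set Sset : Set ℕ := {n | ∃ a ∈ SP cs X, ∃ b ∈ SP cs Y, ℓ (a * w * b) = n} with hSset
  have hne : Sset.Nonempty := ⟨ℓ w, 1, one_mem _, 1, one_mem _, by rw [one_mul, mul_one]⟩
  obtain ⟨a₀, ha₀, b₀, hb₀, hlen₀⟩ := Nat.sInf_mem hne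
  refine ⟨a₀ * w * b₀, a₀⁻¹, b₀⁻¹, inv_mem ha₀, inv_mem hb₀, by group, ?_⟩
  intro a' ha' b' hb'
  have hmem : ℓ (a' * (a₀ * w * b₀) * b') ∈ Sset := by
    refine ⟨a' * a₀, mul_mem ha' ha₀, b₀ * b', mul_mem hb₀ hb', ?_⟩
    group
  have := Nat.sInf_le hmem
  rw [hlen₀]
  exact this


theorem map_conj_self {H : Subgroup W} {g : W} (hg : g ∈ H) :
    H.map (MulAut.conj g).toMonoidHom = H := by
  apply _root_.le_antisymm
  · rintro x ⟨h, hh, rfl⟩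
    show g * h * g⁻¹ ∈ H
    exact mul_mem (mul_mem hg hh) (inv_mem hg)
  · intro x hx
    refine ⟨g⁻¹ * x * g, mul_mem (mul_mem (inv_mem hg) hx) hg, ?_⟩
    show g * (g⁻¹ * x * g) * g⁻¹ = x
    group

theorem map_conj_mul (g h : W) (K : Subgroup W) :
    K.map (MulAut.conj (g * h)).toMonoidHom
      = (K.map (MulAut.conj h).toMonoidHom).map (MulAut.conj g).toMonoidHom := by
  rw [Subgroup.map_map]
  congr 1
  ext x
  show (g * h) * x * (g * h)⁻¹ = g * (h * x * h⁻¹) * g⁻¹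
  group

theorem conj_inj (g : W) : Function.Injective ⇑(MulAut.conj g).toMonoidHom :=
  (MulAut.conj g).injective


end CoxAux

/-- The standard parabolic subgroup of a Coxeter system generated by the simple reflections
indexed by `X`. -/
def CoxeterSystem.standardParabolic {B W : Type*} [Group W] {M : CoxeterMatrix B}
    (cs : CoxeterSystem M W) (X : Set B) : Subgroup W :=
  Subgroup.closure (cs.simple '' X)

/-- For distinct `i, j` and any `w ∈ W`, there are only three possibilities:
`w·W_{{i,j}}·w⁻¹ ∩ W_X` is trivial, or `w·W_{{i,j}}·w⁻¹ ⊆ W_X`, or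
`w·W_{{i,j}}·w⁻¹ ∩ W_X` contains exactly one nontrivial element. -/
theorem conj_dihedral_inter_parabolic_trichotomy {B W : Type*} [Group W] {M : CoxeterMatrix B}
    (cs : CoxeterSystem M W) (X : Set B) (i j : B) (hij : i ≠ j) (w : W) :
    (cs.standardParabolic {i, j}).map (MulAut.conj w).toMonoidHom ⊓ cs.standardParabolic X = ⊥ ∨
    (cs.standardParabolic {i, j}).map (MulAut.conj w).toMonoidHom ≤ cs.standardParabolic X ∨
    (∃! a : W, a ∈ (cs.standardParabolic {i, j}).map (MulAut.conj w).toMonoidHom ⊓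
      cs.standardParabolic X ∧ a ≠ 1) := by
  classical
  rw [(rfl : cs.standardParabolic = CoxAux.SP cs)]
  obtain ⟨d, a, b, haX, hbY, hw, hmin⟩ := CoxAux.exists_min_double_coset cs X {i, j} w
  have hmapw : (CoxAux.SP cs {i, j}).map (MulAut.conj w).toMonoidHom
      = ((CoxAux.SP cs {i, j}).map (MulAut.conj d).toMonoidHom).map
          (MulAut.conj a).toMonoidHom := by
    rw [hw, (by rw [mul_assoc] : a * d * b = a * (d * b)), CoxAux.map_conj_mul,
      CoxAux.map_conj_mul, CoxAux.map_conj_self hbY]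
  have hINF : (CoxAux.SP cs {i, j}).map (MulAut.conj w).toMonoidHom ⊓ CoxAux.SP cs X
      = (((CoxAux.SP cs {i, j}).map (MulAut.conj d).toMonoidHom) ⊓ CoxAux.SP cs X).map
          (MulAut.conj a).toMonoidHom := by
    rw [Subgroup.map_inf _ _ _ (CoxAux.conj_inj a), CoxAux.map_conj_self haX, ← hmapw]
  by_cases hcase : (d * cs.simple i * d⁻¹ ∈ CoxAux.SP cs X)
      ∧ (d * cs.simple j * d⁻¹ ∈ CoxAux.SP cs X)
  · right; left
    have h1 : (CoxAux.SP cs {i, j}).map (MulAut.conj d).toMonoidHom ≤ CoxAux.SP cs X := by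
      rw [CoxAux.SP, MonoidHom.map_closure]
      apply (Subgroup.closure_le _).mpr
      rintro _ ⟨_, ⟨y, hy, rfl⟩, rfl⟩
      show d * cs.simple y * d⁻¹ ∈ CoxAux.SP cs X
      rcases hy with rfl | hy
      · exact hcase.1
      · rw [Set.mem_singleton_iff] at hy
        subst hy
        exact hcase.2
    calc (CoxAux.SP cs {i, j}).map (MulAut.conj w).toMonoidHom
        = ((CoxAux.SP cs {i, j}).map (MulAut.conj d).toMonoidHom).map
            (MulAut.conj a).toMonoidHom := hmapw
      _ ≤ (CoxAux.SP cs X).map (MulAut.conj a).toMonoidHom := Subgroup.map_mono h1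
      _ = CoxAux.SP cs X := CoxAux.map_conj_self haX
  · -- at most one nontrivial element in the intersection
    set g : W := if d * cs.simple i * d⁻¹ ∈ CoxAux.SP cs X then d * cs.simple i * d⁻¹
      else d * cs.simple j * d⁻¹ with hgdef
    have hgsq : ∀ y : B, (d * cs.simple y * d⁻¹) * (d * cs.simple y * d⁻¹) = 1 := by
      intro y
      have h1 := cs.simple_mul_simple_self y
      calc (d * cs.simple y * d⁻¹) * (d * cs.simple y * d⁻¹)
          = d * (cs.simple y * cs.simple y) * d⁻¹ := by group
        _ = 1 := by rw [h1]; group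
    have hgg : g * g = 1 := by
      rw [hgdef]
      split_ifs
      · exact hgsq i
      · exact hgsq j
    have hZg : ∀ x ∈ X, (∃ y ∈ ({i, j} : Set B), cs.simple x = d * cs.simple y * d⁻¹) →
        cs.simple x = g := by
      rintro x hx ⟨y, hy, hsx⟩
      have hsxX : cs.simple x ∈ CoxAux.SP cs X :=
        Subgroup.subset_closure ⟨x, hx, rfl⟩
      rw [hgdef]
      by_cases hdi : d * cs.simple i * d⁻¹ ∈ CoxAux.SP cs X
      · rw [if_pos hdi]
        rcases hy with rfl | hy
        · exact hsx
        · rw [Set.mem_singleton_iff] at hy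
          subst hy
          exact absurd ⟨hdi, hsx ▸ hsxX⟩ hcase
      · rw [if_neg hdi]
        rcases hy with rfl | hy
        · exact absurd (hsx ▸ hsxX) hdi
        · rw [Set.mem_singleton_iff] at hy
          subst hy
          exact hsx
    have hkey : ((CoxAux.SP cs {i, j}).map (MulAut.conj d).toMonoidHom) ⊓ CoxAux.SP cs X
        ≤ Subgroup.closure {g} := by
      intro u hu
      obtain ⟨hu1, hu2⟩ := hu
      have hud : d⁻¹ * u * d ∈ CoxAux.SP cs {i, j} := by
        obtain ⟨v, hv, rfl⟩ := hu1
        have he : d⁻¹ * ((MulEquiv.toMonoidHom (MulAut.conj d)) v) * d = v := by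
          show d⁻¹ * (d * v * d⁻¹) * d = v
          group
        rwa [he]
      have := CoxAux.kilmoyer cs hmin u hu2 hud
      refine (Subgroup.closure_le _).mpr ?_ this
      rintro _ ⟨x, ⟨hxX, y, hy, hsx⟩, rfl⟩
      have := hZg x hxX ⟨y, hy, hsx⟩
      simp [this]
    have hginv : g⁻¹ = g := inv_eq_of_mul_eq_one_right hgg
    have helts : ∀ u ∈ Subgroup.closure ({g} : Set W), u = 1 ∨ u = g := by
      intro u hu
      rw [← Subgroup.zpowers_eq_closure, Subgroup.mem_zpowers_iff] at hu
      obtain ⟨z, rfl⟩ := hu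
      have hg2 : g ^ (2 : ℤ) = 1 := by
        rw [(by norm_num : (2 : ℤ) = 1 + 1), zpow_add, zpow_one, hgg]
      rcases Int.even_or_odd z with ⟨c, hc⟩ | ⟨c, hc⟩
      · left
        rw [hc, (by ring : c + c = 2 * c), zpow_mul, hg2, one_zpow]
      · right
        rw [hc, zpow_add, zpow_one, zpow_mul, hg2, one_zpow, one_mul]
    have hHelts : ∀ u ∈ (CoxAux.SP cs {i, j}).map (MulAut.conj w).toMonoidHom
        ⊓ CoxAux.SP cs X, u = 1 ∨ u = a * g * a⁻¹ := by
      intro u hu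
      rw [hINF, Subgroup.mem_map] at hu
      obtain ⟨u₀, hu₀, rfl⟩ := hu
      rcases helts u₀ (hkey hu₀) with rfl | rfl
      · left
        show a * 1 * a⁻¹ = 1
        group
      · right
        rfl
    by_cases hbot : (CoxAux.SP cs {i, j}).map (MulAut.conj w).toMonoidHom
        ⊓ CoxAux.SP cs X = ⊥
    · left; exact hbot
    · right; right
      have hex : ∃ u ∈ (CoxAux.SP cs {i, j}).map (MulAut.conj w).toMonoidHom
          ⊓ CoxAux.SP cs X, u ≠ 1 := by
        by_contra hcon
        push_neg at hcon
        exact hbot ((Subgroup.eq_bot_iff_forall _).mpr hcon)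
      obtain ⟨u, huH, hune⟩ := hex
      have hueq : u = a * g * a⁻¹ := by
        rcases hHelts u huH with rfl | h
        · exact absurd rfl hune
        · exact h
      refine ⟨u, ⟨huH, hune⟩, ?_⟩
      rintro u' ⟨hu'H, hu'ne⟩
      rcases hHelts u' hu'H with rfl | h
      · exact absurd rfl hu'ne
      · rw [h, hueq]
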